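/- Let k ≥ 2 be an integer. There exists a constant j_k > 0 such that for all x ≥ 0, ∫₀ˣ ((x-h)^{1/k}/(1+(x-h)²)) · (h^{1/k}/(1+h²)) · dh/(h(x-h)) ≤ j_k / (x^{1-2/k} (x² + 4)). -/

import Mathlib

open MeasureTheory Real Set

set_option maxHeartbeats 1000000 in
/-- For every integer `k ≥ 2` there exists `j_k > 0` such that for all `x ≥ 0`,
`∫₀ˣ ((x-h)^{1/k}/(1+(x-h)²)) (h^{1/k}/(1+h²)) dh/(h(x-h)) ≤ j_k/(x^{1-2/k}(x²+4))`. -/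
theorem stmt6 (k : ℕ) (hk : 2 ≤ k) :
    ∃ j : ℝ, 0 < j ∧
      ∀ x : ℝ, 0 ≤ x →
        (∫ h in Ioo (0 : ℝ) x,
            ((x - h) ^ ((1 : ℝ) / k) / (1 + (x - h) ^ 2)) *
              (h ^ ((1 : ℝ) / k) / (1 + h ^ 2)) * (1 / (h * (x - h))))
          ≤ j / (x ^ (1 - 2 / (k : ℝ)) * (x ^ 2 + 4)) := by
  have hk0 : (0:ℝ) < k := by positivity
  refine ⟨16 * k, by positivity, ?_⟩
  intro x hx
  rcases eq_or_lt_of_le hx with rfl | hx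
  · simp only [Ioo_self, Measure.restrict_empty, integral_zero_measure]
    positivity
  set p : ℝ := 1 / k with hp_def
  have hp : 0 < p := by positivity
  have hp2 : p ≤ 1/2 := by
    rw [hp_def, div_le_div_iff₀ hk0 (by norm_num)]
    have : (2:ℝ) ≤ k := by exact_mod_cast hk
    linarith
  have hr : (-1:ℝ) < p - 1 := by linarith
  have hrle : p - 1 ≤ 0 := by linarith
  set A : ℝ := (x/2) ^ (p-1) / (1 + (x/2)^2) with hA_def
  have hA0 : 0 ≤ A := by positivity
  set f : ℝ → ℝ := fun h =>
    ((x - h) ^ p / (1 + (x - h) ^ 2)) * (h ^ p / (1 + h ^ 2)) * (1 / (h * (x - h))) with hf_def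
  set B : ℝ → ℝ := fun h => A * (h ^ (p-1) + (x - h) ^ (p-1)) with hB_def
  -- pointwise bound
  have hbound : ∀ h ∈ Ioo (0:ℝ) x, f h ≤ B h := by
    intro h hh
    obtain ⟨hh0, hhx⟩ := hh
    have hxh : 0 < x - h := by linarith
    have hfe : f h = ((x - h) ^ (p-1) / (1 + (x - h) ^ 2)) * (h ^ (p-1) / (1 + h ^ 2)) := by
      rw [hf_def]
      simp only
      rw [Real.rpow_sub_one hxh.ne', Real.rpow_sub_one hh0.ne']
      have h1 : (0:ℝ) < 1 + (x-h)^2 := by positivity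
      have h2 : (0:ℝ) < 1 + h^2 := by positivity
      field_simp
    rw [hfe, hB_def]
    have key : ∀ t : ℝ, x/2 ≤ t → t ^ (p-1) / (1 + t^2) ≤ A := by
      intro t ht
      have hx2 : (0:ℝ) < x/2 := by linarith
      rw [hA_def]
      exact div_le_div₀ (Real.rpow_nonneg hx2.le _)
        (Real.rpow_le_rpow_of_nonpos hx2 ht hrle) (by positivity) (by nlinarith)
    have trivbd : ∀ t : ℝ, 0 < t → t ^ (p-1) / (1 + t^2) ≤ t ^ (p-1) := by
      intro t ht
      exact div_le_self (Real.rpow_nonneg ht.le _) (by nlinarith)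
    rcases le_or_gt h (x/2) with hc | hc
    · have h1 : (x - h) ^ (p-1) / (1 + (x-h)^2) ≤ A := key _ (by linarith)
      have h2 : h ^ (p-1) / (1 + h^2) ≤ h ^ (p-1) := trivbd h hh0
      calc ((x - h) ^ (p-1) / (1 + (x - h) ^ 2)) * (h ^ (p-1) / (1 + h ^ 2))
          ≤ A * h ^ (p-1) := mul_le_mul h1 h2 (by positivity) hA0
        _ ≤ A * (h ^ (p-1) + (x - h) ^ (p-1)) := by
            have := Real.rpow_nonneg hxh.le (p-1)
            nlinarith
    · have h1 : h ^ (p-1) / (1 + h^2) ≤ A := key _ hc.le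
      have h2 : (x - h) ^ (p-1) / (1 + (x-h)^2) ≤ (x - h) ^ (p-1) := trivbd _ hxh
      calc ((x - h) ^ (p-1) / (1 + (x - h) ^ 2)) * (h ^ (p-1) / (1 + h ^ 2))
          ≤ (x - h) ^ (p-1) * A :=
            mul_le_mul h2 h1 (by positivity) (Real.rpow_nonneg hxh.le _)
        _ ≤ A * (h ^ (p-1) + (x - h) ^ (p-1)) := by
            have := Real.rpow_nonneg hh0.le (p-1)
            nlinarith
  -- integrability
  have I1' : IntervalIntegrable (fun t : ℝ => t ^ (p-1)) volume 0 x :=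
    intervalIntegral.intervalIntegrable_rpow' hr
  have I1 : IntegrableOn (fun t : ℝ => t ^ (p-1)) (Ioo 0 x) :=
    ((intervalIntegrable_iff_integrableOn_Ioc_of_le hx.le).mp I1').mono_set
      Ioo_subset_Ioc_self
  have I2' : IntervalIntegrable (fun h : ℝ => (x - h) ^ (p-1)) volume 0 x := by
    have := (I1'.comp_sub_left x).symm
    simpa using this
  have I2 : IntegrableOn (fun h : ℝ => (x - h) ^ (p-1)) (Ioo 0 x) :=
    ((intervalIntegrable_iff_integrableOn_Ioc_of_le hx.le).mp I2').mono_set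
      Ioo_subset_Ioc_self
  have IB : IntegrableOn B (Ioo 0 x) := (I1.add I2).const_mul A
  have hfmeas : AEStronglyMeasurable f (volume.restrict (Ioo 0 x)) := by
    apply Measurable.aestronglyMeasurable
    rw [hf_def]
    fun_prop
  have hfnonneg : ∀ h ∈ Ioo (0:ℝ) x, 0 ≤ f h := by
    intro h hh
    obtain ⟨hh0, hhx⟩ := hh
    have hxh : 0 < x - h := by linarith
    rw [hf_def]
    positivity
  have If : IntegrableOn f (Ioo 0 x) := by
    apply IB.integrable.mono' hfmeas
    filter_upwards [ae_restrict_mem measurableSet_Ioo] with h hh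
    rw [Real.norm_eq_abs, abs_of_nonneg (hfnonneg h hh)]
    exact hbound h hh
  -- compare integrals
  have step1 : (∫ h in Ioo (0:ℝ) x, f h) ≤ ∫ h in Ioo (0:ℝ) x, B h :=
    setIntegral_mono_on If IB measurableSet_Ioo hbound
  -- compute integral of B
  have int1 : (∫ h in Ioo (0:ℝ) x, h ^ (p-1)) = x ^ p / p := by
    rw [← integral_Ioc_eq_integral_Ioo, ← intervalIntegral.integral_of_le hx.le,
      integral_rpow (Or.inl hr)]
    rw [Real.zero_rpow (by linarith : p - 1 + 1 ≠ 0)]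
    rw [show p - 1 + 1 = p by ring]
    rw [sub_zero]
  have int2 : (∫ h in Ioo (0:ℝ) x, (x - h) ^ (p-1)) = x ^ p / p := by
    rw [← integral_Ioc_eq_integral_Ioo, ← intervalIntegral.integral_of_le hx.le]
    rw [intervalIntegral.integral_comp_sub_left (fun t : ℝ => t ^ (p-1)) x]
    simp only [sub_self, sub_zero]
    rw [intervalIntegral.integral_of_le hx.le, integral_Ioc_eq_integral_Ioo, int1]
  have intB : (∫ h in Ioo (0:ℝ) x, B h) = A * (2 * x ^ p / p) := by
    rw [hB_def]
    simp only
    rw [integral_const_mul, integral_add I1 I2, int1, int2]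
    ring
  rw [intB] at step1
  refine step1.trans ?_
  -- final arithmetic
  have h2p : (2:ℝ) / k = 2 * p := by rw [hp_def]; ring
  have hxe : x ^ (1 - 2/(k:ℝ)) = (x ^ (2*p - 1))⁻¹ := by
    rw [h2p, ← Real.rpow_neg hx.le]
    congr 1
    ring
  have hsplit : (x/2) ^ (p-1) = x ^ (p-1) * 2 ^ (1-p) := by
    rw [Real.div_rpow hx.le (by norm_num : (0:ℝ) ≤ 2), div_eq_mul_inv,
      ← Real.rpow_neg (by norm_num : (0:ℝ) ≤ 2)]
    congr 1
    ring
  have hxx : x ^ p * x ^ (p-1) = x ^ (2*p - 1) := by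
    rw [← Real.rpow_add hx]; ring_nf
  have h2le : (2:ℝ) ^ (1-p) ≤ 2 := by
    calc (2:ℝ) ^ (1-p) ≤ 2 ^ (1:ℝ) :=
      Real.rpow_le_rpow_of_exponent_le (by norm_num) (by linarith)
    _ = 2 := Real.rpow_one 2
  have h2pos : (0:ℝ) < 2 ^ (1-p) := Real.rpow_pos_of_pos (by norm_num) _
  have hpinv : p⁻¹ = (k:ℝ) := by rw [hp_def]; field_simp
  have hxp1 : (0:ℝ) < x ^ (2*p-1) := Real.rpow_pos_of_pos hx _
  have hxp2 : (0:ℝ) < x ^ p := Real.rpow_pos_of_pos hx _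
  have hxp3 : (0:ℝ) < x ^ (p-1) := Real.rpow_pos_of_pos hx _
  have lhs_eq : A * (2 * x ^ p / p) = 8 * 2^(1-p) * (x ^ (2*p-1)) * p⁻¹ / (x^2+4) := by
    rw [hA_def, hsplit, ← hxx]
    have hden : (1:ℝ) + (x/2)^2 = (x^2+4)/4 := by ring
    rw [hden]
    field_simp
    ring
  have rhs_eq : (16 * (k:ℝ)) / (x ^ (1 - 2/(k:ℝ)) * (x^2+4))
      = 16 * (k:ℝ) * x ^ (2*p-1) / (x^2+4) := by
    rw [hxe]
    field_simp
  rw [lhs_eq, rhs_eq, hpinv]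
  gcongr ?_ / _
  nlinarith [mul_nonneg (mul_nonneg (sub_nonneg.2 h2le) hxp1.le) hk0.le]
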